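/- Fix a field k and let M be a smooth k[I]-module that is locally of finite length (every cyclic k[I]-submodule is finite-dimensional over k). For n ≥ 0 set G_n(M) = M^{I_{>n}} ∩ 𝔞_n M, with the convention 𝔞_0 M = M. Then M admits a canonical grading with these pieces: (1) M is the internal direct sum M = ⨁_{n ≥ 0} G_n(M); (2) for every σ ∈ I and every n, σ · G_n(M) ⊆ G_{σ(n)}(M) (with the convention σ(0) = 0); and (3) if σ ∈ I satisfies σ(n) = n, then σ acts as the identity on G_n(M). -/

import Mathlib

open scoped Classical

noncomputable section

/-- The increasing monoid `I`: the submonoid of `Function.End ℕ+` (functions under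
composition) consisting of strictly increasing functions `σ : ℕ+ → ℕ+` such that
`σ n = n + ℓ` for some `ℓ` and all sufficiently large `n`. -/
def IncMonoid : Submonoid (Function.End ℕ+) where
  carrier := {f | StrictMono f ∧ ∃ (l : ℕ) (N : ℕ+), ∀ n : ℕ+, N ≤ n → ((f n : ℕ) = (n : ℕ) + l)}
  one_mem' := ⟨fun _ _ h => h, 0, 1, fun n _ => by show ((n : ℕ+) : ℕ) = (n : ℕ) + 0; omega⟩
  mul_mem' := by
    rintro f g ⟨hf1, lf, Nf, hf2⟩ ⟨hg1, lg, Ng, hg2⟩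
    refine ⟨hf1.comp hg1, lg + lf, max Nf Ng, fun n hn => ?_⟩
    have h1 : (g n : ℕ) = (n : ℕ) + lg := hg2 n (le_trans (le_max_right _ _) hn)
    have h2 : Nf ≤ g n := by
      rw [← PNat.coe_le_coe, h1]
      have : (Nf : ℕ) ≤ (n : ℕ) := (PNat.coe_le_coe _ _).2 (le_trans (le_max_left _ _) hn)
      omega
    have h3 := hf2 (g n) h2
    show ((f (g n) : ℕ)) = (n : ℕ) + (lg + lf)
    omega

/-- The increasing monoid, as a type. -/
abbrev IncM : Type := IncMonoid

theorem IncM.strictMono (σ : IncM) : StrictMono σ.1 := σ.2.1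

theorem IncM.le_apply (σ : IncM) (n : ℕ+) : n ≤ σ.1 n := by
  induction n using PNat.recOn with
  | one => exact (σ.1 1).one_le
  | succ n ih =>
      have h2 : σ.1 n < σ.1 (n + 1) := σ.strictMono (by rw [← PNat.coe_lt_coe]; push_cast; omega)
      rw [← PNat.coe_le_coe] at *
      rw [← PNat.coe_lt_coe] at h2
      push_cast at *
      omega

/-- The underlying function of the generator `α_k`. -/
def alphaFun (k : ℕ+) : Function.End ℕ+ := fun n => if n < k then n else n + 1

theorem alphaFun_strictMono (k : ℕ+) : StrictMono (alphaFun k) := by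
  intro a b hab
  unfold alphaFun
  split_ifs with h1 h2 <;>
    rw [← PNat.coe_lt_coe] at * <;> push_cast at * <;> omega

theorem alphaFun_mem (k : ℕ+) : alphaFun k ∈ IncMonoid := by
  refine ⟨alphaFun_strictMono k, 1, k, fun n hn => ?_⟩
  unfold alphaFun
  rw [if_neg (not_lt.2 hn)]
  push_cast
  ring

/-- The generator `α_k` of the increasing monoid (`k ≥ 1`). -/
def alpha (k : ℕ+) : IncM := ⟨alphaFun k, alphaFun_mem k⟩

/-- The submonoid `I_{≥ n}` of `I` generated by the `α_i` with `i ≥ n`. -/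
def Iges (n : ℕ+) : Submonoid IncM := Submonoid.closure (alpha '' Set.Ici n)

/-- The submonoid `I_{> n}` of `I` generated by the `α_i` with `i > n`. -/
def Igt (n : ℕ) : Submonoid IncM := Submonoid.closure {s | ∃ i : ℕ+, n < (i : ℕ) ∧ s = alpha i}

/-- The monoid algebra `k[I]` of the increasing monoid. -/
abbrev IncAlg (k : Type*) [Field k] : Type _ := MonoidAlgebra k IncM

/-- The image of `σ ∈ I` in the monoid algebra `k[I]`. -/
abbrev ofInc (k : Type*) [Field k] (σ : IncM) : IncAlg k := MonoidAlgebra.of k IncM σ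

/-- A `k[I]`-module is smooth if every vector is fixed by some `I_{>n}`. -/
def IsSmoothMod (k : Type*) [Field k] (M : Type*) [AddCommMonoid M]
    [Module (IncAlg k) M] : Prop :=
  ∀ x : M, ∃ n : ℕ, ∀ σ ∈ Igt n, ofInc k σ • x = x

/-! ### The principal modules `A^r` -/

/-- Index set for the basis of the principal module `A^r`:
strictly increasing `r`-tuples of positive integers. -/
def Idx (r : ℕ) : Type := {v : Fin r → ℕ+ // StrictMono v}

/-- The action of `σ ∈ I` on the index set of `A^r`. -/
def idxAct {r : ℕ} (σ : IncM) (t : Idx r) : Idx r :=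
  ⟨σ.1 ∘ t.1, (IncM.strictMono σ).comp t.2⟩

/-- The representation of the increasing monoid on the principal module `A^r`. -/
def prinRep (k : Type*) [Field k] (r : ℕ) : Representation k IncM (Idx r →₀ k) where
  toFun σ := Finsupp.lmapDomain k k (idxAct σ)
  map_one' := LinearMap.ext fun v => by
    have h : (idxAct (1 : IncM) : Idx r → Idx r) = id := funext fun t => rfl
    simp [Finsupp.lmapDomain_apply, h, Finsupp.mapDomain_id]
  map_mul' := fun σ τ => LinearMap.ext fun v => by
    have h : (idxAct (σ * τ) : Idx r → Idx r) = (idxAct σ) ∘ (idxAct τ) :=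
      funext fun t => rfl
    show Finsupp.lmapDomain k k (idxAct (σ * τ)) v =
      Finsupp.lmapDomain k k (idxAct σ) (Finsupp.lmapDomain k k (idxAct τ) v)
    simp [Finsupp.lmapDomain_apply, h, Finsupp.mapDomain_comp]

/-- The principal module `A^r`, as a module over the monoid algebra `k[I]`. -/
abbrev PrinMod (k : Type*) [Field k] (r : ℕ) : Type _ := (prinRep k r).asModule

/-- The basis vector `e_t` of the principal module `A^r`. -/
def ePrin (k : Type*) [Field k] {r : ℕ} (t : Idx r) : PrinMod k r :=
  (prinRep k r).asModuleEquiv.symm (Finsupp.single t 1)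

/-- The tuple `(1, 2, …, r)` indexing the canonical generator `e_{1,…,r}` of `A^r`. -/
def iotaIdx (r : ℕ) : Idx r :=
  ⟨fun i => ⟨(i : ℕ) + 1, Nat.succ_pos _⟩, fun a b h => by
    exact (PNat.coe_lt_coe _ _).1 (show (a : ℕ) + 1 < (b : ℕ) + 1 from Nat.succ_lt_succ h)⟩

/-! ### The simple modules `B^n` -/

/-- `σ ∈ I` fixes the natural number `n`, with the convention `σ 0 = 0`. -/
def fixesNat (σ : IncM) (n : ℕ) : Prop := ∀ h : 0 < n, σ.1 ⟨n, h⟩ = ⟨n, h⟩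

theorem fixesNat_mul (σ τ : IncM) (n : ℕ) :
    fixesNat (σ * τ) n ↔ fixesNat σ n ∧ fixesNat τ n := by
  rcases Nat.eq_zero_or_pos n with h0 | h0
  · subst h0
    constructor
    · exact fun _ => ⟨fun h => absurd h (lt_irrefl 0), fun h => absurd h (lt_irrefl 0)⟩
    · exact fun _ h => absurd h (lt_irrefl 0)
  · set p : ℕ+ := ⟨n, h0⟩
    have happ : ∀ h : 0 < n, (σ * τ).1 ⟨n, h⟩ = σ.1 (τ.1 ⟨n, h⟩) := fun _ => rfl
    constructor
    · intro h
      have hfix : σ.1 (τ.1 p) = p := h h0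
      have h1 : p ≤ τ.1 p := τ.le_apply p
      have h2 : τ.1 p ≤ σ.1 (τ.1 p) := σ.le_apply _
      have hτp : τ.1 p = p := le_antisymm (h2.trans_eq hfix) h1
      have hσp : σ.1 p = p := by rw [hτp] at hfix; exact hfix
      exact ⟨fun _ => hσp, fun _ => hτp⟩
    · rintro ⟨hσ, hτ⟩ h
      rw [happ h]
      have := hτ h0
      rw [this, hσ h0]

/-- The representation of the increasing monoid on the simple module `B^n`:
`σ` acts by the identity if `σ(n) = n` (with `σ(0) = 0`) and by `0` otherwise. -/
def bRep (k : Type*) [Field k] (n : ℕ) : Representation k IncM k where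
  toFun σ := if fixesNat σ n then 1 else 0
  map_one' := by
    rw [if_pos]
    intro h
    rfl
  map_mul' := fun σ τ => by
    by_cases hσ : fixesNat σ n
    · by_cases hτ : fixesNat τ n
      · rw [if_pos ((fixesNat_mul σ τ n).2 ⟨hσ, hτ⟩), if_pos hσ, if_pos hτ, one_mul]
      · rw [if_neg (fun h => hτ ((fixesNat_mul σ τ n).1 h).2), if_pos hσ, if_neg hτ, one_mul]
    · by_cases hτ : fixesNat τ n
      · rw [if_neg (fun h => hσ ((fixesNat_mul σ τ n).1 h).1), if_neg hσ, if_pos hτ, mul_one]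
      · rw [if_neg (fun h => hσ ((fixesNat_mul σ τ n).1 h).1), if_neg hσ, if_neg hτ, mul_zero]

/-- The simple module `B^n`, as a module over the monoid algebra `k[I]`. -/
abbrev BMod (k : Type*) [Field k] (n : ℕ) : Type _ := (bRep k n).asModule

/-- The set of elements `(σ - 1) · x` of `M` with `σ ∈ I_{≥ n}`, `x ∈ M`. -/
def augSet (k : Type*) (M : Type*) [Field k] [AddCommGroup M] [Module (IncAlg k) M]
    (n : ℕ+) : Set M :=
  {m | ∃ σ ∈ Iges n, ∃ x : M, m = ofInc k σ • x - x}

/-- `𝔞_n M`: the span of the elements `(σ - 1) · x` with `σ ∈ I_{≥ n}`, `x ∈ M`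
(since this set of elements is stable under scaling by `k`, its `k`-span coincides
with the additive subgroup it generates). -/
def augGrp (k : Type*) (M : Type*) [Field k] [AddCommGroup M] [Module (IncAlg k) M]
    (n : ℕ+) : AddSubgroup M :=
  AddSubgroup.closure (augSet k M n)

/-- The additive subgroup `M^{I_{> n}}` of `I_{> n}`-invariant vectors of `M`. -/
def invGrp (k : Type*) (M : Type*) [Field k] [AddCommGroup M] [Module (IncAlg k) M]
    (S : Submonoid IncM) : AddSubgroup M where
  carrier := {x | ∀ σ ∈ S, ofInc k σ • x = x}
  add_mem' := by
    intro a b ha hb σ hσ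
    rw [smul_add, ha σ hσ, hb σ hσ]
  zero_mem' := fun σ _ => smul_zero _
  neg_mem' := by
    intro a ha σ hσ
    rw [smul_neg, ha σ hσ]

/-- The `n`-th canonical graded piece `G_n(M) = M^{I_{>n}} ∩ 𝔞_n M`, with the
convention `𝔞_0 M = M`. -/
def grPiece (k : Type*) (M : Type*) [Field k] [AddCommGroup M] [Module (IncAlg k) M]
    (n : ℕ) : AddSubgroup M :=
  invGrp k M (Igt n) ⊓ (if h : 0 < n then augGrp k M ⟨n, h⟩ else ⊤)

/-- The application of `σ ∈ I` to a natural number, with the convention `σ(0)=0`. -/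
def extApply (σ : IncM) (n : ℕ) : ℕ :=
  if h : 0 < n then (σ.1 ⟨n, h⟩ : ℕ) else 0

namespace CG

/-- `ℕ+` made from adding a natural to a positive. -/
def padd (j : ℕ+) (r : ℕ) : ℕ+ := ⟨(j : ℕ) + r, by have := j.pos; omega⟩

@[simp] lemma padd_coe (j : ℕ+) (r : ℕ) : ((padd j r : ℕ+) : ℕ) = (j : ℕ) + r := rfl

lemma pnat_eq {a b : ℕ+} (h : (a:ℕ) = (b:ℕ)) : a = b := PNat.coe_injective h

lemma incm_mul_apply (σ τ : IncM) (m : ℕ+) : (σ * τ).1 m = σ.1 (τ.1 m) := rfl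

lemma L1 (i j : ℕ+) (h : i ≤ j) : alpha (j+1) * alpha i = alpha i * alpha j := by
  apply Subtype.ext
  funext m
  show alphaFun (j+1) (alphaFun i m) = alphaFun i (alphaFun j m)
  unfold alphaFun
  rw [← PNat.coe_le_coe] at h
  split_ifs at * <;>
    (apply pnat_eq <;> simp only [← PNat.coe_lt_coe, ← PNat.coe_le_coe] at * <;>
      simp only [padd_coe, PNat.add_coe, PNat.one_coe, PNat.mk_coe] at * <;> omega)

lemma L3 (c : ℕ+) (r : ℕ) : ∀ j : ℕ+, c ≤ j →
    (alpha c)^r * alpha j = alpha (padd j r) * (alpha c)^r := by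
  induction r with
  | zero =>
      intro j _
      have : padd j 0 = j := pnat_eq (by simp)
      simp [this]
  | succ r ih =>
      intro j hj
      have h1 : alpha c * alpha j = alpha (j + 1) * alpha c := (L1 c j hj).symm
      have h2 : c ≤ j + 1 := le_trans hj (by rw [← PNat.coe_le_coe]; simp only [padd_coe, PNat.add_coe, PNat.one_coe, PNat.mk_coe]; omega)
      have h3 : padd (j+1) r = padd j (r+1) := pnat_eq (by simp only [padd_coe, PNat.add_coe, PNat.one_coe, PNat.mk_coe]; omega)
      calc (alpha c)^(r+1) * alpha j = (alpha c)^r * (alpha c * alpha j) := by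
            rw [pow_succ, mul_assoc]
        _ = ((alpha c)^r * alpha (j+1)) * alpha c := by rw [h1, mul_assoc]
        _ = (alpha (padd j (r+1)) * (alpha c)^r) * alpha c := by rw [ih (j+1) h2, h3]
        _ = alpha (padd j (r+1)) * (alpha c)^(r+1) := by rw [mul_assoc, ← pow_succ]

lemma L2 (c : ℕ+) (r : ℕ) : ∀ t : ℕ, 1 ≤ t → t ≤ r →
    alpha (padd c t) * (alpha c)^r = (alpha c)^(r+1) := by
  induction r with
  | zero => omega
  | succ r ih =>
      intro t h1 h2
      have hcc : alpha (c+1) * alpha c = alpha c * alpha c := L1 c c le_rfl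
      rcases eq_or_lt_of_le h1 with h1' | h1'
      · -- t = 1
        have hp : padd c t = c + 1 := pnat_eq (by simp only [padd_coe, PNat.add_coe, PNat.one_coe, PNat.mk_coe]; omega)
        calc alpha (padd c t) * (alpha c)^(r+1)
            = alpha (c+1) * (alpha c * (alpha c)^r) := by rw [hp, pow_succ']
          _ = (alpha c * alpha c) * (alpha c)^r := by rw [← mul_assoc, hcc]
          _ = (alpha c)^(r+1+1) := by rw [mul_assoc, ← pow_succ', ← pow_succ']
      · -- 2 ≤ t
        have hL : alpha (padd c t) * alpha c = alpha c * alpha (padd c (t-1)) := by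
          have : padd c (t-1) + 1 = padd c t := pnat_eq (by simp only [padd_coe, PNat.add_coe, PNat.one_coe, PNat.mk_coe]; omega)
          rw [← this]
          exact L1 c (padd c (t-1)) (by rw [← PNat.coe_le_coe]; simp only [padd_coe, PNat.add_coe, PNat.one_coe, PNat.mk_coe]; omega)
        calc alpha (padd c t) * (alpha c)^(r+1)
            = (alpha (padd c t) * alpha c) * (alpha c)^r := by rw [mul_assoc, ← pow_succ']
          _ = alpha c * (alpha (padd c (t-1)) * (alpha c)^r) := by rw [hL, mul_assoc]
          _ = alpha c * (alpha c)^(r+1) := by rw [ih (t-1) (by omega) (by omega)]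
          _ = (alpha c)^(r+1+1) := by rw [← pow_succ']

lemma alpha_mem_Igt {n : ℕ} {i : ℕ+} (h : n < (i:ℕ)) : alpha i ∈ Igt n :=
  Submonoid.subset_closure ⟨i, h, rfl⟩

lemma alpha_mem_Iges {p i : ℕ+} (h : p ≤ i) : alpha i ∈ Iges p :=
  Submonoid.subset_closure ⟨i, h, rfl⟩

lemma Igt_mono {m n : ℕ} (h : m ≤ n) : Igt n ≤ Igt m :=
  Submonoid.closure_le.2 (by rintro s ⟨i, hi, rfl⟩; exact alpha_mem_Igt (by omega))

lemma mono_count (σ : IncM) : ∀ (t : ℕ) (a b : ℕ+), (b:ℕ) = (a:ℕ) + t →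
    (σ.1 a : ℕ) + t ≤ (σ.1 b : ℕ) := by
  intro t
  induction t with
  | zero =>
      intro a b h
      have : a = b := pnat_eq (by omega)
      subst this; omega
  | succ t ih =>
      intro a b h
      have hb' : (0:ℕ) < (a:ℕ) + t := by have := a.pos; omega
      set b' : ℕ+ := ⟨(a:ℕ) + t, hb'⟩ with hb'def
      have h1 := ih a b' rfl
      have h2 : b' < b := by rw [← PNat.coe_lt_coe]; simp [hb'def]; omega
      have h3 := σ.strictMono h2
      rw [← PNat.coe_lt_coe] at h3
      omega

lemma sigma_fix_below (σ : IncM) (n : ℕ+) (h : σ.1 n = n) {j : ℕ+} (hj : j ≤ n) :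
    σ.1 j = j := by
  have h1 := σ.le_apply j
  rw [← PNat.coe_le_coe] at h1 hj
  have h2 := mono_count σ ((n:ℕ) - (j:ℕ)) j n (by omega)
  rw [h] at h2
  exact pnat_eq (by omega)

end CG

namespace CG

lemma gen_aux : ∀ (l : ℕ) (σ : IncM) (N : ℕ+),
    (∀ m : ℕ+, N ≤ m → ((σ.1 m : ℕ) = (m:ℕ) + l)) →
    ∀ n : ℕ, (∀ j : ℕ+, (j:ℕ) ≤ n → σ.1 j = j) → σ ∈ Igt n := by
  intro l
  induction l with
  | zero =>
      intro σ N h n _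
      have hσ : σ = 1 := by
        apply Subtype.ext
        funext m
        have h1 := σ.le_apply m
        have h2 := mono_count σ (N:ℕ) m (padd m (N:ℕ)) (by simp)
        have h3 := h (padd m (N:ℕ)) (by rw [← PNat.coe_le_coe]; simp only [padd_coe]; have := m.pos; omega)
        rw [← PNat.coe_le_coe] at h1
        show σ.1 m = m
        apply pnat_eq
        simp only [padd_coe] at h2 h3
        omega
      rw [hσ]; exact one_mem _
  | succ l ih =>
      intro σ N h n hfix
      classical
      have hex : ∃ m : ℕ, ∃ hm : 0 < m, ((σ.1 ⟨m, hm⟩ : ℕ) ≠ m) := by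
        refine ⟨(N:ℕ), N.pos, ?_⟩
        have heq : (⟨(N:ℕ), N.pos⟩ : ℕ+) = N := rfl
        rw [heq, h N le_rfl]
        omega
      obtain ⟨k₀, hk₀pos, hk₀ne, hfixlt⟩ :
          ∃ k₀ : ℕ, ∃ hp : 0 < k₀, ((σ.1 ⟨k₀, hp⟩ : ℕ) ≠ k₀) ∧
            (∀ m : ℕ+, (m:ℕ) < k₀ → σ.1 m = m) := by
        obtain ⟨hp, hne⟩ := Nat.find_spec hex
        refine ⟨Nat.find hex, hp, hne, ?_⟩
        intro m hm
        by_contra hc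
        refine Nat.find_min hex hm ⟨m.pos, ?_⟩
        have heq : (⟨(m:ℕ), m.pos⟩ : ℕ+) = m := rfl
        rw [heq]
        intro hcc
        exact hc (pnat_eq hcc)
      set k : ℕ+ := ⟨k₀, hk₀pos⟩ with hkdef
      have hkc : (k:ℕ) = k₀ := rfl
      have hσk : (k₀:ℕ) < (σ.1 k : ℕ) := by
        have := σ.le_apply k
        rw [← PNat.coe_le_coe] at this
        rcases Nat.lt_or_ge k₀ (σ.1 k : ℕ) with hlt | hge
        · exact hlt
        · exact absurd (by omega : ((σ.1 k : ℕ)) = k₀) hk₀ne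
      have hnk : n < k₀ := by
        by_contra hc
        push_neg at hc
        have h5 := hfix k (by omega)
        rw [← PNat.coe_inj] at h5
        exact hk₀ne (by omega)
      have hτpos : ∀ m : ℕ+, ¬ ((m:ℕ) < k₀) → 0 < (σ.1 m : ℕ) - 1 := by
        intro m hm
        push_neg at hm
        have h2 : σ.1 k ≤ σ.1 m := σ.strictMono.monotone
          (by rw [← PNat.coe_le_coe]; omega)
        rw [← PNat.coe_le_coe] at h2
        omega
      set τfun : ℕ+ → ℕ+ := fun m =>
        if hm : (m:ℕ) < k₀ then m else ⟨(σ.1 m : ℕ) - 1, hτpos m hm⟩ with hτfundef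
      have hτatbig : ∀ m : ℕ+, ¬ ((m:ℕ) < k₀) → (τfun m : ℕ) = (σ.1 m : ℕ) - 1 := by
        intro m hm; simp only [hτfundef]; exact congrArg PNat.val (dif_neg hm)
      have hτatsmall : ∀ m : ℕ+, (m:ℕ) < k₀ → τfun m = m := by
        intro m hm; simp only [hτfundef]; exact dif_pos hm
      have hσbig : ∀ m : ℕ+, ¬ ((m:ℕ) < k₀) → k₀ < (σ.1 m : ℕ) := by
        intro m hm
        have h2 : σ.1 k ≤ σ.1 m := σ.strictMono.monotone
          (by rw [← PNat.coe_le_coe]; omega)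
        rw [← PNat.coe_le_coe] at h2
        omega
      have hτmono : StrictMono τfun := by
        intro a b hab
        have hab' : (a:ℕ) < (b:ℕ) := hab
        have hsab := σ.strictMono hab
        rw [← PNat.coe_lt_coe] at hsab
        have hla := σ.le_apply a
        rw [← PNat.coe_le_coe] at hla
        rw [← PNat.coe_lt_coe]
        by_cases ha : (a:ℕ) < k₀ <;> by_cases hb : (b:ℕ) < k₀
        · rw [hτatsmall a ha, hτatsmall b hb]; exact hab
        · rw [hτatsmall a ha, hτatbig b hb]
          have := hσbig b hb
          omega
        · omega
        · rw [hτatbig a ha, hτatbig b hb]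
          have := hσbig a ha
          omega
      have hτmem : τfun ∈ IncMonoid := by
        refine ⟨hτmono, l, padd N k₀, fun m hm => ?_⟩
        rw [← PNat.coe_le_coe] at hm
        simp only [padd_coe] at hm
        have := N.pos
        have hm1 : ¬ ((m:ℕ) < k₀) := by omega
        have hm2 := h m (by rw [← PNat.coe_le_coe]; omega)
        rw [hτatbig m hm1, hm2]
        omega
      set τ : IncM := ⟨τfun, hτmem⟩ with hτdef
      have hfac : σ = alpha k * τ := by
        apply Subtype.ext
        funext m
        show σ.1 m = alphaFun k (τfun m)
        by_cases hm : (m:ℕ) < k₀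
        · rw [hτatsmall m hm]
          have hlt : m < k := by rw [← PNat.coe_lt_coe]; omega
          rw [show alphaFun k m = m from if_pos hlt]
          exact hfixlt m hm
        · have h1 : ¬ (τfun m < k) := by
            rw [← PNat.coe_lt_coe]
            rw [hτatbig m hm]
            have := hσbig m hm
            omega
          rw [show alphaFun k (τfun m) = τfun m + 1 from if_neg h1]
          apply pnat_eq
          have h3 := hτatbig m hm
          have h4 := hσbig m hm
          push_cast
          omega
      have hτmem' : τ ∈ Igt n := by
        apply ih τ (padd N k₀) _ n
        · intro j hj
          exact hτatsmall j (by omega)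
        · intro m hm
          rw [← PNat.coe_le_coe] at hm
          simp only [padd_coe] at hm
          have := N.pos
          have hm1 : ¬ ((m:ℕ) < k₀) := by omega
          have hm2 := h m (by rw [← PNat.coe_le_coe]; omega)
          show (τfun m : ℕ) = (m:ℕ) + l
          rw [hτatbig m hm1, hm2]
          omega
      rw [hfac]
      exact mul_mem (alpha_mem_Igt (by omega)) hτmem'

lemma mem_Igt_of_fix (σ : IncM) (n : ℕ) (hfix : ∀ j : ℕ+, (j:ℕ) ≤ n → σ.1 j = j) :
    σ ∈ Igt n := by
  obtain ⟨l, N, h⟩ := σ.2.2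
  exact gen_aux l σ N h n hfix

lemma mem_Igt_zero (σ : IncM) : σ ∈ Igt 0 :=
  mem_Igt_of_fix σ 0 (fun j hj => by have := j.pos; omega)

end CG

namespace CG

section modlemmas

variable {k : Type*} [Field k] {M : Type*} [AddCommGroup M] [Module (IncAlg k) M]

lemma smul_mul_smul (σ τ : IncM) (x : M) :
    ofInc k (σ * τ) • x = ofInc k σ • (ofInc k τ • x) := by
  rw [show ofInc k (σ * τ) = ofInc k σ * ofInc k τ from map_mul (MonoidAlgebra.of k IncM) σ τ,
    mul_smul]

lemma smul_one_smul (x : M) : ofInc k (1 : IncM) • x = x := by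
  rw [show ofInc k (1 : IncM) = 1 from map_one (MonoidAlgebra.of k IncM), one_smul]

lemma mem_invGrp {S : Submonoid IncM} {x : M} :
    x ∈ invGrp k M S ↔ ∀ σ ∈ S, ofInc k σ • x = x := Iff.rfl

lemma mem_invGrp_of_gens {n : ℕ} {x : M}
    (h : ∀ i : ℕ+, n < (i:ℕ) → ofInc k (alpha i) • x = x) :
    x ∈ invGrp k M (Igt n) := by
  rw [mem_invGrp]
  intro σ hσ
  induction hσ using Submonoid.closure_induction with
  | mem τ hτ => obtain ⟨i, hi, rfl⟩ := hτ; exact h i hi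
  | one => exact smul_one_smul x
  | mul σ τ hσ hτ ihσ ihτ => rw [smul_mul_smul, ihτ, ihσ]

lemma invGrp_mono {S T : Submonoid IncM} (h : S ≤ T) : invGrp k M T ≤ invGrp k M S :=
  fun _ hx σ hσ => hx σ (h hσ)

lemma sub_mem_augGrp {p : ℕ+} {σ : IncM} (hσ : σ ∈ Iges p) (y : M) :
    ofInc k σ • y - y ∈ augGrp k M p :=
  AddSubgroup.subset_closure ⟨σ, hσ, y, rfl⟩

/-- On a finitely supported span, everything is fixed by some `I_{>N}`. -/
lemma span_fixed (hsm : IsSmoothMod k M)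
    (hlf : ∀ x : M, ∃ (m : ℕ) (v : Fin m → M),
      ∀ y ∈ Submodule.span (IncAlg k) ({x} : Set M),
        ∃ c : Fin m → k, y = ∑ i, algebraMap k (IncAlg k) (c i) • v i) (x : M) :
    ∃ N : ℕ, ∀ z ∈ Submodule.span (IncAlg k) ({x} : Set M),
      ∀ σ ∈ Igt N, ofInc k σ • z = z := by
  obtain ⟨m, v, hv⟩ := hlf x
  choose Nf hNf using fun i => hsm (v i)
  refine ⟨Finset.univ.sup Nf, ?_⟩
  intro z hz σ hσ
  obtain ⟨c, rfl⟩ := hv z hz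
  rw [Finset.smul_sum]
  refine Finset.sum_congr rfl (fun i _ => ?_)
  rw [smul_smul, ← Algebra.commutes (c i) (ofInc k σ), mul_smul]
  congr 1
  exact hNf i σ (Igt_mono (Finset.le_sup (Finset.mem_univ i)) hσ)

/-- The key kill lemma: `α_c^R` coequalizes the action of `I_{≥c}` on a part of `M`
on which `I_{>N}` acts trivially, provided `c + R > N`. -/
lemma pow_kill {W : Submodule (IncAlg k) M} {N : ℕ}
    (htriv : ∀ z ∈ W, ∀ σ ∈ Igt N, ofInc k σ • z = z)
    (c : ℕ+) (R : ℕ) (hcR : N < (c:ℕ) + R) {σ : IncM} (hσ : σ ∈ Iges c) :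
    ∀ z ∈ W, ofInc k ((alpha c)^R) • (ofInc k σ • z) = ofInc k ((alpha c)^R) • z := by
  induction hσ using Submonoid.closure_induction with
  | mem τ hτ =>
      obtain ⟨j, hj, rfl⟩ := hτ
      intro z hz
      rw [← smul_mul_smul, L3 c R j hj, smul_mul_smul]
      refine htriv _ (W.smul_mem _ hz) _ (alpha_mem_Igt ?_)
      rw [Set.mem_Ici, ← PNat.coe_le_coe] at hj
      simp only [padd_coe]
      omega
  | one => intro z hz; rw [smul_one_smul]
  | mul σ τ hσ' hτ' ihσ ihτ =>
      intro z hz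
      rw [smul_mul_smul σ τ, ihσ (ofInc k τ • z) (W.smul_mem _ hz), ihτ z hz]

/-- Key vanishing: an `I_{>n}`-invariant vector lying in `𝔞_{n+1} M` is zero. -/
lemma key_vanishing (hsm : IsSmoothMod k M)
    (hlf : ∀ x : M, ∃ (m : ℕ) (v : Fin m → M),
      ∀ y ∈ Submodule.span (IncAlg k) ({x} : Set M),
        ∃ c : Fin m → k, y = ∑ i, algebraMap k (IncAlg k) (c i) • v i)
    (n : ℕ) (x : M) (hinv : x ∈ invGrp k M (Igt n))
    (haug : x ∈ augGrp k M (Nat.succPNat n)) : x = 0 := by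
  set c : ℕ+ := Nat.succPNat n with hcdef
  have hc : (c:ℕ) = n + 1 := rfl
  have key : ∀ u ∈ augGrp k M c, ∃ R₀, ∀ R ≥ R₀, ofInc k ((alpha c)^R) • u = 0 := by
    intro u hu
    induction hu using AddSubgroup.closure_induction with
    | mem z hz =>
        obtain ⟨σ, hσ, y, rfl⟩ := hz
        obtain ⟨N, hN⟩ := span_fixed hsm hlf y
        refine ⟨N + 1, fun R hR => ?_⟩
        rw [smul_sub,
          pow_kill hN c R (by omega) hσ y (Submodule.mem_span_singleton_self y), sub_self]
    | zero => exact ⟨0, fun R _ => smul_zero _⟩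
    | add z w hz hw ihz ihw =>
        obtain ⟨R₀, h₀⟩ := ihz
        obtain ⟨R₁, h₁⟩ := ihw
        exact ⟨max R₀ R₁, fun R hR => by
          rw [smul_add, h₀ R (le_trans (le_max_left _ _) hR),
            h₁ R (le_trans (le_max_right _ _) hR), add_zero]⟩
    | neg z hz ihz =>
        obtain ⟨R₀, h₀⟩ := ihz
        exact ⟨R₀, fun R hR => by rw [smul_neg, h₀ R hR, neg_zero]⟩
  obtain ⟨R₀, hR₀⟩ := key x haug
  have hfix : ofInc k ((alpha c)^(R₀+1)) • x = x :=
    hinv _ (pow_mem (alpha_mem_Igt (by omega)) _)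
  rw [← hfix, hR₀ (R₀+1) (by omega)]

/-- Telescoping: `z - α_c^R z` lies in `𝔞_c M`. -/
lemma telescope (c : ℕ+) (R : ℕ) (z : M) :
    z - ofInc k ((alpha c)^R) • z ∈ augGrp k M c := by
  induction R with
  | zero => rw [pow_zero, smul_one_smul, sub_self]; exact zero_mem _
  | succ R ih =>
      have h1 : z - ofInc k ((alpha c)^(R+1)) • z
          = (z - ofInc k ((alpha c)^R) • z)
            + (-(ofInc k (alpha c) • (ofInc k ((alpha c)^R) • z)
                - ofInc k ((alpha c)^R) • z)) := by
        rw [← smul_mul_smul, ← pow_succ']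
        abel
      rw [h1]
      exact add_mem ih (neg_mem (sub_mem_augGrp (alpha_mem_Iges le_rfl) _))

end modlemmas

end CG

namespace CG

section spanlemmas

variable {k : Type*} [Field k] {M : Type*} [AddCommGroup M] [Module (IncAlg k) M]

lemma grPiece_zero_eq : grPiece k M 0 = invGrp k M (Igt 0) ⊓ ⊤ := by
  rw [grPiece, dif_neg (lt_irrefl 0)]

lemma grPiece_succ_eq (n : ℕ) :
    grPiece k M (n+1) = invGrp k M (Igt (n+1)) ⊓ augGrp k M (Nat.succPNat n) := by
  rw [grPiece, dif_pos (Nat.succ_pos n)]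
  rfl

lemma spanning (hsm : IsSmoothMod k M)
    (hlf : ∀ x : M, ∃ (m : ℕ) (v : Fin m → M),
      ∀ y ∈ Submodule.span (IncAlg k) ({x} : Set M),
        ∃ c : Fin m → k, y = ∑ i, algebraMap k (IncAlg k) (c i) • v i) (x : M) :
    x ∈ ⨆ m : ℕ, grPiece k M m := by
  obtain ⟨N, hN⟩ := span_fixed hsm hlf x
  suffices H : ∀ n : ℕ, ∀ z ∈ Submodule.span (IncAlg k) ({x} : Set M),
      z ∈ invGrp k M (Igt n) → z ∈ ⨆ m : ℕ, grPiece k M m by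
    refine H N x (Submodule.mem_span_singleton_self x)
      (fun σ hσ => hN x (Submodule.mem_span_singleton_self x) σ hσ)
  intro n
  induction n with
  | zero =>
      intro z _ hzinv
      have hz : z ∈ grPiece k M 0 := by
        rw [grPiece_zero_eq]
        exact AddSubgroup.mem_inf.2 ⟨hzinv, AddSubgroup.mem_top z⟩
      exact (le_iSup (fun m => grPiece k M m) 0) hz
  | succ n ih =>
      intro z hzW hzinv
      by_cases hnN : N ≤ n
      · exact ih z hzW (fun σ hσ => hN z hzW σ (Igt_mono hnN hσ))
      · push_neg at hnN
        set c : ℕ+ := Nat.succPNat n with hcdef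
        have hc : (c:ℕ) = n + 1 := rfl
        set R : ℕ := N - n with hRdef
        set e : M := ofInc k ((alpha c)^R) • z with hedef
        have heW : e ∈ Submodule.span (IncAlg k) ({x} : Set M) :=
          Submodule.smul_mem _ _ hzW
        have hS1 : ofInc k ((alpha c)^(R+1)) • z = e := by
          have hL2 := L2 c R R (by omega) le_rfl
          calc ofInc k ((alpha c)^(R+1)) • z
              = ofInc k (alpha (padd c R) * (alpha c)^R) • z := by rw [hL2]
            _ = ofInc k (alpha (padd c R)) • e := by rw [smul_mul_smul, hedef]
            _ = e := hN e heW _ (alpha_mem_Igt (by simp only [padd_coe]; omega))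
        have heinv : e ∈ invGrp k M (Igt n) := by
          apply mem_invGrp_of_gens
          intro j hj
          rcases Nat.lt_or_ge (N+1) (j:ℕ) with hbig | hmid
          · exact hN e heW _ (alpha_mem_Igt (by omega))
          · rcases Nat.eq_or_lt_of_le hj with hj1 | hj2
            · have hjc : j = c := pnat_eq (by omega)
              rw [hjc, hedef, ← smul_mul_smul, ← pow_succ']
              exact hS1
            · have hjc : j = padd c ((j:ℕ) - (n+1)) := pnat_eq (by simp only [padd_coe]; omega)
              rw [hjc, hedef, ← smul_mul_smul, L2 c R _ (by omega) (by omega)]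
              exact hS1
        have hg : z - e ∈ grPiece k M (n+1) := by
          rw [grPiece_succ_eq]
          refine AddSubgroup.mem_inf.2 ⟨?_, ?_⟩
          · exact sub_mem hzinv (invGrp_mono (Igt_mono (Nat.le_succ n)) heinv)
          · exact telescope c R z
        have hsum : z = e + (z - e) := by abel
        rw [hsum]
        exact add_mem (ih e heW heinv) ((le_iSup (fun m => grPiece k M m) (n+1)) hg)

end spanlemmas

end CG

namespace CG

section maplemmas

variable {k : Type*} [Field k] {M : Type*} [AddCommGroup M] [Module (IncAlg k) M]

lemma extApply_pos (σ : IncM) {n : ℕ} (h : 0 < n) :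
    extApply σ n = (σ.1 ⟨n, h⟩ : ℕ) := dif_pos h

lemma extApply_zero (σ : IncM) : extApply σ 0 = 0 := dif_neg (lt_irrefl 0)

lemma extApply_one (n : ℕ) : extApply (1 : IncM) n = n := by
  unfold extApply
  split_ifs with h
  · rfl
  · omega

lemma extApply_mul (σ τ : IncM) (n : ℕ) :
    extApply (σ * τ) n = extApply σ (extApply τ n) := by
  rcases Nat.eq_zero_or_pos n with rfl | hpos
  · rw [extApply_zero, extApply_zero, extApply_zero]
  · rw [extApply_pos _ hpos, extApply_pos _ hpos]
    have hp2 : 0 < ((τ.1 ⟨n, hpos⟩ : ℕ+) : ℕ) := (τ.1 ⟨n, hpos⟩).pos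
    rw [extApply_pos _ hp2]
    rfl

lemma alpha_apply_lt {i : ℕ+} {p : ℕ+} (h : p < i) : (alpha i).1 p = p := by
  show alphaFun i p = p
  unfold alphaFun
  rw [if_pos h]

lemma alpha_apply_ge {i : ℕ+} {p : ℕ+} (h : i ≤ p) : (alpha i).1 p = p + 1 := by
  show alphaFun i p = p + 1
  unfold alphaFun
  rw [if_neg (not_lt.2 h)]

lemma inv_map (σ : IncM) (n : ℕ) (x : M) (hx : x ∈ invGrp k M (Igt n)) :
    ofInc k σ • x ∈ invGrp k M (Igt (extApply σ n)) := by
  suffices H : ∀ σ' ∈ Igt 0, ∀ (n : ℕ) (x : M), x ∈ invGrp k M (Igt n) →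
      ofInc k σ' • x ∈ invGrp k M (Igt (extApply σ' n)) from
    H σ (mem_Igt_zero σ) n x hx
  intro σ' hσ'
  induction hσ' using Submonoid.closure_induction with
  | mem τ hτ =>
      obtain ⟨i, _, rfl⟩ := hτ
      intro n x hx
      rcases Nat.lt_or_ge n (i:ℕ) with hni | hni
      · have h1 : ofInc k (alpha i) • x = x := hx _ (alpha_mem_Igt hni)
        have h2 : extApply (alpha i) n = n := by
          rcases Nat.eq_zero_or_pos n with rfl | hpos
          · exact extApply_zero _
          · rw [extApply_pos _ hpos, alpha_apply_lt (i := i) (p := ⟨n, hpos⟩) ((PNat.coe_lt_coe _ _).1 hni)]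
            rfl
        rw [h1, h2]
        exact hx
      · have hpos : 0 < n := lt_of_lt_of_le i.pos hni
        have h2 : extApply (alpha i) n = n + 1 := by
          rw [extApply_pos _ hpos, alpha_apply_ge (i := i) (p := ⟨n, hpos⟩) ((PNat.coe_le_coe _ _).1 hni)]
          push_cast
          rfl
        rw [h2]
        apply mem_invGrp_of_gens
        intro j hj
        have hjpos : 0 < (j:ℕ) - 1 := by omega
        set j' : ℕ+ := ⟨(j:ℕ) - 1, hjpos⟩ with hj'def
        have hjc : ((j':ℕ+):ℕ) = (j:ℕ) - 1 := rfl
        have hj'eq : j = j' + 1 := pnat_eq (by push_cast; omega)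
        have hij' : i ≤ j' := by rw [← PNat.coe_le_coe]; show (i:ℕ) ≤ (j:ℕ) - 1; omega
        rw [← smul_mul_smul, hj'eq, L1 i j' hij', smul_mul_smul,
          hx _ (alpha_mem_Igt (show n < ((j':ℕ+):ℕ) by omega))]
  | one =>
      intro n x hx
      rw [smul_one_smul, extApply_one]
      exact hx
  | mul σ₁ σ₂ h₁ h₂ ih₁ ih₂ =>
      intro n x hx
      rw [smul_mul_smul, extApply_mul]
      exact ih₁ _ _ (ih₂ n x hx)

lemma aug_map_gen (i : ℕ+) (p : ℕ+) (x : M) (hx : x ∈ augGrp k M p) :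
    ofInc k (alpha i) • x ∈ augGrp k M ((alpha i).1 p) := by
  induction hx using AddSubgroup.closure_induction with
  | mem z hz =>
      obtain ⟨τ, hτ, y, rfl⟩ := hz
      by_cases hpi : p < i
      · rw [alpha_apply_lt hpi, smul_sub]
        have key : ofInc k (alpha i) • (ofInc k τ • y) - ofInc k (alpha i) • y
            = (ofInc k (alpha i * τ) • y - y) - (ofInc k (alpha i) • y - y) := by
          rw [smul_mul_smul]; abel
        rw [key]
        exact sub_mem
          (sub_mem_augGrp (mul_mem (alpha_mem_Iges (le_of_lt hpi)) hτ) y)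
          (sub_mem_augGrp (alpha_mem_Iges (le_of_lt hpi)) y)
      · push_neg at hpi
        rw [alpha_apply_ge hpi, smul_sub]
        obtain ⟨τ', hτ', hcomm⟩ : ∃ τ' ∈ Iges (p+1), alpha i * τ = τ' * alpha i := by
          induction hτ using Submonoid.closure_induction with
          | mem ρ hρ =>
              obtain ⟨l, hl, rfl⟩ := hρ
              rw [Set.mem_Ici] at hl
              refine ⟨alpha (l+1), alpha_mem_Iges ?_, (L1 i l (le_trans hpi hl)).symm⟩
              rw [← PNat.coe_le_coe]
              push_cast
              rw [← PNat.coe_le_coe] at hl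
              omega
          | one => exact ⟨1, one_mem _, by rw [mul_one, one_mul]⟩
          | mul τ₁ τ₂ h₁ h₂ ih₁ ih₂ =>
              obtain ⟨τ₁', m₁, e₁⟩ := ih₁
              obtain ⟨τ₂', m₂, e₂⟩ := ih₂
              exact ⟨τ₁' * τ₂', mul_mem m₁ m₂, by
                rw [← mul_assoc, e₁, mul_assoc, e₂, ← mul_assoc]⟩
        have key : ofInc k (alpha i) • (ofInc k τ • y)
            = ofInc k τ' • (ofInc k (alpha i) • y) := by
          rw [← smul_mul_smul, ← smul_mul_smul, hcomm]
        rw [key]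
        exact sub_mem_augGrp hτ' _
  | zero => rw [smul_zero]; exact zero_mem _
  | add z w hz hw ihz ihw => rw [smul_add]; exact add_mem ihz ihw
  | neg z hz ihz => rw [smul_neg]; exact neg_mem ihz

lemma aug_map (σ : IncM) (p : ℕ+) (x : M) (hx : x ∈ augGrp k M p) :
    ofInc k σ • x ∈ augGrp k M (σ.1 p) := by
  suffices H : ∀ σ' ∈ Igt 0, ∀ (p : ℕ+) (x : M), x ∈ augGrp k M p →
      ofInc k σ' • x ∈ augGrp k M (σ'.1 p) from H σ (mem_Igt_zero σ) p x hx
  intro σ' hσ'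
  induction hσ' using Submonoid.closure_induction with
  | mem τ hτ =>
      obtain ⟨i, _, rfl⟩ := hτ
      intro p x hx
      exact aug_map_gen i p x hx
  | one =>
      intro p x hx
      rw [smul_one_smul]
      exact hx
  | mul σ₁ σ₂ h₁ h₂ ih₁ ih₂ =>
      intro p x hx
      rw [smul_mul_smul]
      exact ih₁ _ _ (ih₂ p x hx)

lemma part3_mem (σ : IncM) (n : ℕ) (h : extApply σ n = n) : σ ∈ Igt n := by
  rcases Nat.eq_zero_or_pos n with rfl | hpos
  · exact mem_Igt_zero σ
  · rw [extApply_pos _ hpos] at h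
    apply mem_Igt_of_fix
    intro j hj
    exact sigma_fix_below σ ⟨n, hpos⟩ (pnat_eq h)
      ((PNat.coe_le_coe _ _).1 hj)

end maplemmas

end CG

namespace CG

section finallemmas

variable {k : Type*} [Field k] {M : Type*} [AddCommGroup M] [Module (IncAlg k) M]

lemma mem_grPiece_pos {n : ℕ} (h : 0 < n) {x : M} :
    x ∈ grPiece k M n ↔ x ∈ invGrp k M (Igt n) ∧ x ∈ augGrp k M ⟨n, h⟩ := by
  rw [grPiece, dif_pos h]
  exact AddSubgroup.mem_inf

lemma grPiece_le_inv (n : ℕ) : grPiece k M n ≤ invGrp k M (Igt n) :=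
  fun _ hx => ((AddSubgroup.mem_inf).1 hx).1

lemma indep (hsm : IsSmoothMod k M)
    (hlf : ∀ x : M, ∃ (m : ℕ) (v : Fin m → M),
      ∀ y ∈ Submodule.span (IncAlg k) ({x} : Set M),
        ∃ c : Fin m → k, y = ∑ i, algebraMap k (IncAlg k) (c i) • v i) :
    ∀ (s : Finset ℕ) (f : ℕ → M),
    (∀ n ∈ s, f n ∈ grPiece k M n) → (∑ n ∈ s, f n) = 0 → ∀ n ∈ s, f n = 0 := by
  intro s
  induction s using Finset.strongInduction with
  | _ s ih =>
    intro f hf hsum n hn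
    have hne : s.Nonempty := ⟨n, hn⟩
    set m := s.max' hne with hmdef
    have hms : m ∈ s := s.max'_mem hne
    have hfm : f m = 0 := by
      rcases Nat.eq_zero_or_pos m with hm0 | hmpos
      · have hs0 : s = {0} := by
          apply Finset.eq_singleton_iff_unique_mem.2
          refine ⟨hm0 ▸ hms, fun a ha => ?_⟩
          have := s.le_max' a ha
          omega
        rw [hs0, Finset.sum_singleton] at hsum
        rw [hm0, hsum]
      · have h2 : ∑ j ∈ s.erase m, f j = - f m := by
          rw [Finset.sum_erase_eq_sub hms, hsum, zero_sub]
        have hinv : f m ∈ invGrp k M (Igt (m-1)) := by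
          have h3 : f m = - ∑ j ∈ s.erase m, f j := by rw [h2, neg_neg]
          rw [h3]
          apply neg_mem
          apply sum_mem
          intro j hj
          have hjs := Finset.mem_of_mem_erase hj
          have hjlt : j < m := lt_of_le_of_ne (s.le_max' j hjs) (Finset.ne_of_mem_erase hj)
          exact invGrp_mono (Igt_mono (by omega)) (grPiece_le_inv j (hf j hjs))
        have haug : f m ∈ augGrp k M (Nat.succPNat (m-1)) := by
          have h3 := ((mem_grPiece_pos hmpos).1 (hf m hms)).2
          have h4 : (Nat.succPNat (m-1)) = (⟨m, hmpos⟩ : ℕ+) :=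
            pnat_eq (by rw [Nat.succPNat_coe, PNat.mk_coe]; omega)
          rw [h4]
          exact h3
        exact key_vanishing hsm hlf (m-1) (f m) hinv haug
    rcases eq_or_ne n m with rfl | hnm
    · exact hfm
    · have hsub : s.erase m ⊂ s := Finset.erase_ssubset hms
      have hsum' : ∑ j ∈ s.erase m, f j = 0 := by
        rw [Finset.sum_erase_eq_sub hms, hsum, hfm, sub_zero]
      exact ih _ hsub f (fun j hj => hf j (Finset.mem_of_mem_erase hj)) hsum' n
        (Finset.mem_erase.2 ⟨hnm, hn⟩)

lemma internal (hsm : IsSmoothMod k M)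
    (hlf : ∀ x : M, ∃ (m : ℕ) (v : Fin m → M),
      ∀ y ∈ Submodule.span (IncAlg k) ({x} : Set M),
        ∃ c : Fin m → k, y = ∑ i, algebraMap k (IncAlg k) (c i) • v i) :
    DirectSum.IsInternal (fun n : ℕ => grPiece k M n) := by
  classical
  constructor
  · rw [injective_iff_map_eq_zero]
    intro d hd
    rw [DirectSum.coeAddMonoidHom_eq_dfinsuppSum] at hd
    have hz := indep hsm hlf d.support (fun n => (d n : M))
      (fun n _ => (d n).2) hd
    apply DFinsupp.ext
    intro n
    by_cases hns : n ∈ d.support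
    · exact Subtype.ext (hz n hns)
    · exact DFinsupp.notMem_support_iff.1 hns
  · intro x
    have hx := spanning hsm hlf x
    have hle : (⨆ m : ℕ, grPiece k M m)
        ≤ (DirectSum.coeAddMonoidHom (fun n : ℕ => grPiece k M n)).range := by
      apply iSup_le
      intro n g hg
      exact ⟨DirectSum.of (fun m : ℕ => grPiece k M m) n ⟨g, hg⟩,
        DirectSum.coeAddMonoidHom_of _ _ _⟩
    exact hle hx

end finallemmas

end CG
/-- The canonical grading: a smooth, locally finite length
`k[I]`-module `M` is the internal direct sum of the pieces
`G_n(M) = M^{I_{>n}} ∩ 𝔞_n M`, each `σ ∈ I` maps `G_n(M)` into `G_{σ(n)}(M)`, and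
`σ` acts as the identity on `G_n(M)` whenever `σ(n) = n`. -/
theorem canonical_grading (k : Type*) [Field k]
    (M : Type*) [AddCommGroup M] [Module (IncAlg k) M]
    (hsm : IsSmoothMod k M)
    (hlf : ∀ x : M, ∃ (m : ℕ) (v : Fin m → M),
      ∀ y ∈ Submodule.span (IncAlg k) ({x} : Set M),
        ∃ c : Fin m → k, y = ∑ i, algebraMap k (IncAlg k) (c i) • v i) :
    DirectSum.IsInternal (fun n : ℕ => grPiece k M n) ∧
    (∀ (σ : IncM) (n : ℕ), ∀ x ∈ grPiece k M n,
      ofInc k σ • x ∈ grPiece k M (extApply σ n)) ∧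
    (∀ (σ : IncM) (n : ℕ), extApply σ n = n →
      ∀ x ∈ grPiece k M n, ofInc k σ • x = x) := by
  classical
  refine ⟨CG.internal hsm hlf, ?_, ?_⟩
  · intro σ n x hx
    rcases Nat.eq_zero_or_pos n with rfl | hpos
    · rw [CG.extApply_zero]
      have hxi : x ∈ invGrp k M (Igt 0) := CG.grPiece_le_inv 0 hx
      rw [hxi σ (CG.mem_Igt_zero σ)]
      exact hx
    · obtain ⟨hxi, hxa⟩ := (CG.mem_grPiece_pos hpos).1 hx
      have hep : 0 < extApply σ n := by
        rw [CG.extApply_pos _ hpos]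
        exact (σ.1 ⟨n, hpos⟩).pos
      refine (CG.mem_grPiece_pos hep).2 ⟨CG.inv_map σ n x hxi, ?_⟩
      have h4 : (⟨extApply σ n, hep⟩ : ℕ+) = σ.1 ⟨n, hpos⟩ :=
        CG.pnat_eq (CG.extApply_pos σ hpos)
      rw [h4]
      exact CG.aug_map σ ⟨n, hpos⟩ x hxa
  · intro σ n h x hx
    exact CG.grPiece_le_inv n hx σ (CG.part3_mem σ n h)

end
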